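/- arXiv:math/0607282 — 3 statements merged into one kernel-verified Lean document; each statement's English description precedes it below -/
import Mathlib

section
/- Let β ∈ (0,2], c ∈ (0,1], and let φ : (0,c] → (0,∞) be measurable and regularly varying at zero with index −(β+1). Set l(x) = x^{β+1} φ(x). Then for every r > β: ∫₀^t ( ∫_{|x| ≤ s^{1/β}} |x|^r φ(|x|) dx ) ds ∼ (2β/((r−β)·r)) · t^{r/β} · l(t^{1/β}) as t → 0+ (t ≤ c^β), i.e. the ratio of the two sides tends to 1; in particular the inner integral satisfies ∫_{|x| ≤ s^{1/β}} |x|^r φ(|x|) dx ∼ (2/(r−β)) s^{r/β − 1} l(s^{1/β}) as s → 0+. -/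
open MeasureTheory ProbabilityTheory Filter Set Topology ENNReal NNReal

noncomputable section

/-- The Lévy exponent `Ψ(u) = -iua - ∫ (e^{iux} - 1 - iux 1_{|x|≤1}) ν(dx)`
for a Lévy process with characteristics `(a, 0, ν)` (no Brownian component). -/
def levyExponent (a : ℝ) (ν : Measure ℝ) (u : ℝ) : ℂ :=
  -(Complex.I * u * a) -
    ∫ x : ℝ, (Complex.exp (Complex.I * u * x) - 1 -
      Complex.I * u * x * Set.indicator {y : ℝ | abs y ≤ 1} (fun _ => (1 : ℂ)) x) ∂ν

/-- `X` is a real Lévy process with characteristics `(a, 0, ν)` (no Brownian component)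
on the probability space `(Ω, P)`: it starts at `0`, has a.s. càdlàg paths, independent
and stationary increments, characteristic function `exp(-tΨ(u))`, and `ν` is a Lévy
measure. -/
structure IsLevyNoBM {Ω : Type*} [MeasurableSpace Ω] (P : Measure Ω)
    (X : ℝ → Ω → ℝ) (a : ℝ) (ν : Measure ℝ) : Prop where
  isProb : IsProbabilityMeasure P
  meas : ∀ t : ℝ, Measurable (X t)
  zero : ∀ᵐ ω ∂P, X 0 ω = 0
  cadlag : ∀ᵐ ω ∂P, ∀ t : ℝ, 0 ≤ t →
    ContinuousWithinAt (fun s => X s ω) (Set.Ici t) t ∧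
      (0 < t → ∃ L : ℝ, Tendsto (fun s => X s ω) (nhdsWithin t (Set.Iio t)) (nhds L))
  indepIncr : ∀ (n : ℕ) (t : Fin (n + 1) → ℝ), Monotone t → 0 ≤ t 0 →
    iIndepFun
      (fun i : Fin n => fun ω => X (t i.succ) ω - X (t i.castSucc) ω) P
  statIncr : ∀ s t : ℝ, 0 ≤ s → 0 ≤ t →
    Measure.map (fun ω => X (t + s) ω - X s ω) P = Measure.map (X t) P
  nu_zero : ν {0} = 0
  nu_levy : ∫⁻ x : ℝ, ENNReal.ofReal (min (x ^ 2) 1) ∂ν < ⊤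
  charFn : ∀ (u t : ℝ), 0 ≤ t →
    ∫ ω, Complex.exp (Complex.I * u * X t ω) ∂P =
      Complex.exp (-(t : ℂ) * levyExponent a ν u)

/-- The Blumenthal–Getoor index `β = inf {p > 0 : ∫_{|x|≤1} |x|^p ν(dx) < ∞}`. -/
def bgIndex (ν : Measure ℝ) : ℝ :=
  sInf {p : ℝ | 0 < p ∧ ∫⁻ x in {y : ℝ | abs y ≤ 1}, ENNReal.ofReal (abs x ^ p) ∂ν < ⊤}

/-- `E [ sup_{0 ≤ s ≤ t} |Z_s|^p ]` as a Lebesgue integral in `ℝ≥0∞`. -/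
def supMoment {Ω : Type*} [MeasurableSpace Ω] (P : Measure Ω)
    (Z : ℝ → Ω → ℝ) (p t : ℝ) : ℝ≥0∞ :=
  ∫⁻ ω, (⨆ s ∈ Set.Icc (0 : ℝ) t, (‖Z s ω‖₊ : ℝ≥0∞)) ^ p ∂P

/-- `φ` is regularly varying at zero with index `b`. -/
def RegVaryingAtZero (φ : ℝ → ℝ) (b : ℝ) : Prop :=
  ∀ s : ℝ, 0 < s → Tendsto (fun x => φ (s * x) / φ x) (𝓝[>] 0) (𝓝 (s ^ b))

/-- The slowly varying part `l(x) = x^{β+1} φ(x)` of `φ`. -/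
def svPart (φ : ℝ → ℝ) (β x : ℝ) : ℝ := x ^ (β + 1) * φ x

/-- `l̲(t) = l(t^{1/β})`. -/
def lbar (φ : ℝ → ℝ) (β t : ℝ) : ℝ := svPart φ β (t ^ (1 / β))

/-- Condition (1.5): on `{0 < |x| ≤ c}` the Lévy measure `ν` is dominated by the measure
with Lebesgue density `φ(|x|)`, where `φ : (0,c] → (0,∞)` is measurable and regularly
varying at zero with index `-(β+1)`. -/
def Cond15 (ν : Measure ℝ) (β c : ℝ) (φ : ℝ → ℝ) : Prop :=
  0 < c ∧ c ≤ 1 ∧ Measurable φ ∧ (∀ x ∈ Set.Ioc (0 : ℝ) c, 0 < φ x) ∧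
    RegVaryingAtZero φ (-(β + 1)) ∧
    ν.restrict {x : ℝ | 0 < abs x ∧ abs x ≤ c} ≤
      (volume.withDensity fun x => ENNReal.ofReal (φ |x|)).restrict {x : ℝ | 0 < abs x ∧ abs x ≤ c}

/-- Condition (1.6): on `{0 < |x| ≤ c}` the Lévy measure `ν` is dominated by the measure
with Lebesgue density `C·|x|^{-(β+1)}`. -/
def Cond16 (ν : Measure ℝ) (β c C : ℝ) : Prop :=
  0 < c ∧ c ≤ 1 ∧ 0 < C ∧
    ν.restrict {x : ℝ | 0 < abs x ∧ abs x ≤ c} ≤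
      (volume.withDensity fun x => ENNReal.ofReal (C / abs x ^ (β + 1))).restrict
        {x : ℝ | 0 < abs x ∧ abs x ≤ c}


theorem my_uct (f : ℝ → ℝ) (hf : Measurable f)
    (h : ∀ v : ℝ, Tendsto (fun x => f (x + v) - f x) atTop (𝓝 0))
    (ε : ℝ) (hε : 0 < ε) :
    ∃ X : ℝ, ∀ x ≥ X, ∀ v ∈ Icc (0:ℝ) 1, |f (x + v) - f x| ≤ ε := by
  by_contra hcon
  push_neg at hcon
  choose x0 hx0 v0 hv0 hbig0 using hcon
  set x : ℕ → ℝ := fun n => x0 n with hxdef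
  set v : ℕ → ℝ := fun n => v0 n with hvdef
  have hx : ∀ n : ℕ, (n:ℝ) ≤ x n := fun n => hx0 n
  have hv : ∀ n : ℕ, v n ∈ Icc (0:ℝ) 1 := fun n => hv0 n
  have hbig : ∀ n : ℕ, ε < |f (x n + v n) - f (x n)| := fun n => hbig0 n
  have hxtop : Tendsto x atTop atTop :=
    tendsto_atTop_mono hx tendsto_natCast_atTop_atTop
  set μ : Measure ℝ := volume.restrict (Icc (0:ℝ) 2) with hμ
  haveI : IsFiniteMeasure μ := by
    constructor
    rw [hμ, Measure.restrict_apply_univ, Real.volume_Icc]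
    norm_num
  have key : ∀ (z : ℕ → ℝ), Tendsto z atTop atTop →
      Tendsto (fun n => μ {s | ε/2 ≤ |f (z n + s) - f (z n)|}) atTop (𝓝 0) := by
    intro z hz
    have hmeas : ∀ n, AEStronglyMeasurable (fun s => f (z n + s) - f (z n)) μ :=
      fun n => ((hf.comp (measurable_const.add measurable_id)).sub
        measurable_const).aestronglyMeasurable
    have hae : ∀ᵐ s ∂μ, Tendsto (fun n => f (z n + s) - f (z n)) atTop (𝓝 0) := by
      refine ae_of_all _ fun s => ?_
      have := (h s).comp hz
      simpa [Function.comp_def, add_comm] using this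
    have h2 := (MeasureTheory.tendstoInMeasure_of_tendsto_ae hmeas hae) (ENNReal.ofReal (ε/2))
      (ENNReal.ofReal_pos.2 (by linarith))
    refine h2.congr' (Eventually.of_forall fun n => ?_)
    congr 1
    ext s
    simp only [mem_setOf_eq, edist_dist, Real.dist_eq, sub_zero]
    exact ENNReal.ofReal_le_ofReal_iff (abs_nonneg _)
  have k1 := ENNReal.tendsto_atTop_zero.1 (key x hxtop)
  have k2 := ENNReal.tendsto_atTop_zero.1 (key (fun n => x n + v n) (by
    apply tendsto_atTop_mono (fun n => ?_) hxtop
    have := (hv n).1; linarith))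
  obtain ⟨N1, hN1⟩ := k1 (1/4) (by norm_num)
  obtain ⟨N2, hN2⟩ := k2 (1/4) (by norm_num)
  have hEm' := hN1 (max N1 N2) (le_max_left _ _)
  have hFm' := hN2 (max N1 N2) (le_max_right _ _)
  set n := max N1 N2 with hn
  set E : Set ℝ := {s : ℝ | ε/2 ≤ |f (x n + s) - f (x n)|} ∩ Icc (0:ℝ) 2 with hE
  set F : Set ℝ := {s : ℝ | ε/2 ≤ |f (x n + v n + s) - f (x n + v n)|} ∩ Icc (0:ℝ) 2 with hF
  have hrestr : ∀ (S : Set ℝ), μ S = volume (S ∩ Icc (0:ℝ) 2) := by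
    intro S
    rw [hμ, Measure.restrict_apply' measurableSet_Icc]
  have hEm : volume E ≤ 1/4 := by rw [hE, ← hrestr]; exact hEm'
  have hFm : volume F ≤ 1/4 := by rw [hF, ← hrestr]; exact hFm'
  set F' : Set ℝ := (fun s => s - v n) ⁻¹' F with hF'
  have hF'm : volume F' = volume F := by
    rw [hF']
    simpa [sub_eq_add_neg] using measure_preimage_add_right volume (-(v n)) F
  have hsub : ¬ (Icc (v n) 2 ⊆ E ∪ F') := by
    intro hss
    have h1 : volume (Icc (v n) 2) ≤ volume (E ∪ F') := measure_mono hss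
    have h2 : volume (E ∪ F') ≤ volume E + volume F' := measure_union_le _ _
    have hv1 : (1:ℝ) ≤ 2 - v n := by have := (hv n).2; linarith
    have h4 : (1:ℝ≥0∞) ≤ volume (Icc (v n) 2) := by
      rw [Real.volume_Icc]
      exact le_trans (by norm_num) (ENNReal.ofReal_le_ofReal hv1)
    have h5 : (1:ℝ≥0∞) ≤ 1/4 + 1/4 :=
      le_trans h4 (le_trans h1 (le_trans h2 (add_le_add hEm (hF'm ▸ hFm))))
    have h6 : (1:ℝ≥0∞)/4 + 1/4 < 1 := by
      rw [ENNReal.div_add_div_same, ENNReal.div_lt_iff (by norm_num) (by norm_num)]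
      norm_num
    exact absurd (lt_of_le_of_lt h5 h6) (lt_irrefl _)
  obtain ⟨s, hs, hsnot⟩ := not_subset.1 hsub
  have hs02 : s ∈ Icc (0:ℝ) 2 := ⟨le_trans (hv n).1 hs.1, hs.2⟩
  have hsv02 : s - v n ∈ Icc (0:ℝ) 2 := by
    constructor
    · linarith [hs.1]
    · have := (hv n).1; linarith [hs.2]
  rw [mem_union] at hsnot
  push_neg at hsnot
  have h1 : |f (x n + s) - f (x n)| < ε/2 := by
    by_contra hcc
    exact hsnot.1 ⟨le_of_not_gt hcc, hs02⟩
  have h2 : |f (x n + s) - f (x n + v n)| < ε/2 := by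
    by_contra hcc
    apply hsnot.2
    rw [hF', mem_preimage, hF]
    refine ⟨?_, hsv02⟩
    have he : x n + v n + (s - v n) = x n + s := by ring
    rw [mem_setOf_eq, he]
    exact le_of_not_gt hcc
  have habs : |f (x n + v n) - f (x n)| ≤
      |f (x n + v n) - f (x n + s)| + |f (x n + s) - f (x n)| :=
    abs_sub_le _ _ _
  rw [abs_sub_comm (f (x n + v n)) (f (x n + s))] at habs
  linarith [hbig n]


theorem my_potter (l : ℝ → ℝ) (c : ℝ) (hc : 0 < c) (hm : Measurable l)
    (hpos : ∀ x ∈ Ioc (0:ℝ) c, 0 < l x)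
    (hsv : ∀ s : ℝ, 0 < s → Tendsto (fun x => l (s * x) / l x) (𝓝[>] 0) (𝓝 1))
    (δ : ℝ) (hδ : 0 < δ) :
    ∃ u₀, u₀ ∈ Ioc (0:ℝ) c ∧ ∀ u ∈ Ioc (0:ℝ) u₀, ∀ y ∈ Ioc (0:ℝ) 1,
      l (u * y) ≤ Real.exp δ * y ^ (-δ) * l u := by
  set f : ℝ → ℝ := fun x => Real.log (l (Real.exp (-x))) with hfdef
  have hfm : Measurable f :=
    (hm.comp (Real.measurable_exp.comp measurable_neg)).log
  have hexpTo0 : Tendsto (fun x : ℝ => Real.exp (-x)) atTop (𝓝 0) :=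
    Real.tendsto_exp_atBot.comp tendsto_neg_atTop_atBot
  have hexp0 : Tendsto (fun x : ℝ => Real.exp (-x)) atTop (𝓝[>] 0) := by
    rw [tendsto_nhdsWithin_iff]
    exact ⟨hexpTo0, Eventually.of_forall fun x => Real.exp_pos _⟩
  have hconv : ∀ v : ℝ, Tendsto (fun x => f (x + v) - f x) atTop (𝓝 0) := by
    intro v
    have h1 : Tendsto (fun x : ℝ => l (Real.exp (-v) * Real.exp (-x)) / l (Real.exp (-x)))
        atTop (𝓝 1) := (hsv (Real.exp (-v)) (Real.exp_pos _)).comp hexp0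
    have h2 : Tendsto (fun x : ℝ =>
        Real.log (l (Real.exp (-v) * Real.exp (-x)) / l (Real.exp (-x)))) atTop (𝓝 0) := by
      have := (Real.continuousAt_log (by norm_num : (1:ℝ) ≠ 0)).tendsto.comp h1
      simpa [Function.comp_def] using this
    apply h2.congr'
    have hev1 : ∀ᶠ x : ℝ in atTop, Real.exp (-x) ≤ c :=
      hexpTo0.eventually_le_const hc
    have hev2 : ∀ᶠ x : ℝ in atTop, Real.exp (-(x + v)) ≤ c := by
      have : Tendsto (fun x : ℝ => Real.exp (-(x + v))) atTop (𝓝 0) :=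
        Real.tendsto_exp_atBot.comp
          (tendsto_neg_atBot_iff.2 (tendsto_atTop_add_const_right _ v tendsto_id))
      exact this.eventually_le_const hc
    filter_upwards [hev1, hev2] with x hx1 hx2
    have hp1 : 0 < l (Real.exp (-x)) := hpos _ ⟨Real.exp_pos _, hx1⟩
    have hmul : Real.exp (-v) * Real.exp (-x) = Real.exp (-(x + v)) := by
      rw [← Real.exp_add]; ring_nf
    have hp2 : 0 < l (Real.exp (-v) * Real.exp (-x)) := by
      rw [hmul]; exact hpos _ ⟨Real.exp_pos _, hx2⟩
    rw [Real.log_div (ne_of_gt hp2) (ne_of_gt hp1)]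
    simp only [hfdef, hmul]
  obtain ⟨X0, hX0⟩ := my_uct f hfm hconv δ hδ
  set X : ℝ := max X0 (-Real.log c) with hXdef
  -- the stepping claim
  have claim : ∀ n : ℕ, ∀ x ≥ X, ∀ w ∈ Icc (0:ℝ) n, |f (x + w) - f x| ≤ δ * n := by
    intro n
    induction n with
    | zero =>
      intro x hx w hw
      simp only [Nat.cast_zero, Icc_self, mem_singleton_iff] at hw
      simp [hw]
    | succ n ih =>
      intro x hx w hw
      rcases le_or_gt w 1 with h1 | h1
      · have := hX0 x (le_trans (le_max_left _ _) hx) w ⟨hw.1, h1⟩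
        calc |f (x + w) - f x| ≤ δ := this
          _ ≤ δ * ((n + 1 : ℕ) : ℝ) := by push_cast; nlinarith [Nat.cast_nonneg (α := ℝ) n]
      · have hw1 : w - 1 ∈ Icc (0:ℝ) n := by
          constructor
          · linarith
          · have := hw.2; push_cast at this ⊢; linarith
        have ha := ih x hx (w - 1) hw1
        have hb := hX0 (x + (w - 1)) (by have := hw1.1; have hxX : X0 ≤ x := le_trans (le_max_left _ _) hx; linarith) 1 ⟨zero_le_one, le_refl 1⟩
        have he : x + (w - 1) + 1 = x + w := by ring
        rw [he] at hb
        calc |f (x + w) - f x| ≤ |f (x + w) - f (x + (w - 1))| + |f (x + (w - 1)) - f x| :=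
              abs_sub_le _ _ _
          _ ≤ δ + δ * n := add_le_add hb ha
          _ = δ * ((n + 1 : ℕ) : ℝ) := by push_cast; ring
  refine ⟨Real.exp (-X), ⟨Real.exp_pos _, ?_⟩, ?_⟩
  · rw [← Real.exp_log hc]
    apply Real.exp_le_exp.2
    have : -Real.log c ≤ X := le_max_right _ _
    linarith
  intro u hu y hy
  set x : ℝ := -Real.log u with hxdef
  set w : ℝ := -Real.log y with hwdef
  have hxX : X ≤ x := by
    have : u ≤ Real.exp (-X) := hu.2
    have := Real.log_le_log hu.1 this
    rw [Real.log_exp] at this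
    rw [hxdef]; linarith
  have hw0 : 0 ≤ w := by
    rw [hwdef]
    have : Real.log y ≤ 0 := Real.log_nonpos (le_of_lt hy.1) hy.2
    linarith
  have hexpx : Real.exp (-x) = u := by rw [hxdef, neg_neg, Real.exp_log hu.1]
  have hexpw : Real.exp (-w) = y := by rw [hwdef, neg_neg, Real.exp_log hy.1]
  set n : ℕ := ⌈w⌉₊ with hndef
  have hwn : w ∈ Icc (0:ℝ) n := ⟨hw0, Nat.le_ceil w⟩
  have hn1 : (n:ℝ) ≤ w + 1 := le_of_lt (Nat.ceil_lt_add_one hw0)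
  have hcl := claim n x hxX w hwn
  have hkey : f (x + w) - f x ≤ δ * (w + 1) := by
    calc f (x + w) - f x ≤ |f (x + w) - f x| := le_abs_self _
      _ ≤ δ * n := hcl
      _ ≤ δ * (w + 1) := by nlinarith
  -- translate back
  have huy : Real.exp (-(x + w)) = u * y := by
    rw [neg_add, Real.exp_add, hexpx, hexpw]
  have hxc : u ≤ c := le_trans hu.2 (by
    rw [← Real.exp_log hc]
    apply Real.exp_le_exp.2
    have : -Real.log c ≤ X := le_max_right _ _
    linarith)
  have hluy : 0 < l (u * y) := hpos _ ⟨mul_pos hu.1 hy.1, by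
    calc u * y ≤ u * 1 := by nlinarith [hy.2, le_of_lt hu.1]
      _ = u := mul_one u
      _ ≤ c := hxc⟩
  have hlu : 0 < l u := hpos _ ⟨hu.1, hxc⟩
  have hfxw : f (x + w) = Real.log (l (u * y)) := by
    simp only [hfdef]; rw [huy]
  have hfx : f x = Real.log (l u) := by simp only [hfdef]; rw [hexpx]
  rw [hfxw, hfx] at hkey
  have hyrp : 0 < y ^ (-δ) := Real.rpow_pos_of_pos hy.1 _
  have hfin : Real.log (l (u * y)) ≤ Real.log (Real.exp δ * y ^ (-δ) * l u) := by
    rw [Real.log_mul (ne_of_gt (mul_pos (Real.exp_pos δ) hyrp)) (ne_of_gt hlu),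
      Real.log_mul (ne_of_gt (Real.exp_pos δ)) (ne_of_gt hyrp),
      Real.log_exp, Real.log_rpow hy.1]
    have : -δ * Real.log y = δ * w := by rw [hwdef]; ring
    rw [this]
    linarith
  calc l (u * y) = Real.exp (Real.log (l (u * y))) := (Real.exp_log hluy).symm
    _ ≤ Real.exp (Real.log (Real.exp δ * y ^ (-δ) * l u)) := Real.exp_le_exp.2 hfin
    _ = Real.exp δ * y ^ (-δ) * l u :=
        Real.exp_log (mul_pos (mul_pos (Real.exp_pos δ) hyrp) hlu)


theorem my_karamata (l : ℝ → ℝ) (c : ℝ) (hc : 0 < c) (hm : Measurable l)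
    (hpos : ∀ x ∈ Ioc (0:ℝ) c, 0 < l x)
    (hsv : ∀ s : ℝ, 0 < s → Tendsto (fun x => l (s * x) / l x) (𝓝[>] 0) (𝓝 1))
    (a : ℝ) (ha : 0 < a) :
    ∃ u₀, u₀ ∈ Ioc (0:ℝ) c ∧ IntegrableOn (fun x => x ^ (a-1) * l x) (Ioc 0 u₀) ∧
      Tendsto (fun u => (∫ x in Ioc (0:ℝ) u, x ^ (a-1) * l x) / (u ^ a * l u))
        (𝓝[>] 0) (𝓝 (1/a)) := by
  obtain ⟨u₀, hu₀, hpot⟩ := my_potter l c hc hm hpos hsv (a/2) (by linarith)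
  have hrpowCOn : ∀ (q : ℝ) (S : Set ℝ), S ⊆ Ioi 0 → ContinuousOn (fun x : ℝ => x ^ q) S :=
    fun q S hS x hx =>
      (Real.continuousAt_rpow_const x q (Or.inl (ne_of_gt (hS hx)))).continuousWithinAt
  have hψae : ∀ (S : Set ℝ), MeasurableSet S → S ⊆ Ioi 0 →
      AEStronglyMeasurable (fun x : ℝ => x ^ (a-1) * l x) (volume.restrict S) := by
    intro S hS hsub
    exact ((((hrpowCOn (a-1) S hsub).aemeasurable hS)).mul hm.aemeasurable).aestronglyMeasurable
  -- integrability of the bound  x ↦ K * x ^ (a/2 - 1) on Ioc 0 b, b > 0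
  have hbint : ∀ b : ℝ, 0 < b → ∀ K : ℝ,
      IntegrableOn (fun x : ℝ => K * x ^ (a/2 - 1)) (Ioc 0 b) := by
    intro b hb K
    have h1 : IntervalIntegrable (fun x : ℝ => x ^ (a/2 - 1)) volume 0 b :=
      intervalIntegral.intervalIntegrable_rpow' (by linarith)
    rw [intervalIntegrable_iff, uIoc_of_le hb.le] at h1
    exact h1.const_mul K
  -- pointwise Potter bound on (0, u₀]
  have hptw : ∀ u ∈ Ioc (0:ℝ) u₀, ∀ x ∈ Ioc (0:ℝ) u,
      l x ≤ Real.exp (a/2) * (x / u) ^ (-(a/2)) * l u := by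
    intro u hu x hx
    have hxu : u * (x / u) = x := by
      rw [mul_comm]
      exact div_mul_cancel₀ x hu.1.ne'
    have hyy : x / u ∈ Ioc (0:ℝ) 1 := by
      constructor
      · exact div_pos hx.1 hu.1
      · rw [div_le_one hu.1]; exact hx.2
    have := hpot u hu (x / u) hyy
    rw [hxu] at this
    exact this
  have hint : ∀ u ∈ Ioc (0:ℝ) u₀, IntegrableOn (fun x => x ^ (a-1) * l x) (Ioc 0 u) := by
    intro u hu
    have hbnd := hbint u hu.1 (Real.exp (a/2) * u ^ (a/2) * l u)
    apply hbnd.mono' (hψae _ measurableSet_Ioc (fun x hx => hx.1))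
    rw [ae_restrict_iff' measurableSet_Ioc]
    refine ae_of_all _ fun x hx => ?_
    have hx0 := hx.1
    have hlx : 0 < l x := hpos x ⟨hx.1, le_trans hx.2 (le_trans hu.2 hu₀.2)⟩
    have hlu : 0 < l u := hpos u ⟨hu.1, le_trans hu.2 hu₀.2⟩
    rw [Real.norm_eq_abs, abs_of_nonneg (by positivity)]
    have h1 := hptw u hu x hx
    have h2 : (x / u) ^ (-(a/2)) = x ^ (-(a/2)) * u ^ (a/2) := by
      rw [Real.div_rpow hx.1.le hu.1.le, Real.rpow_neg hu.1.le, div_eq_mul_inv, inv_inv]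
    have h3 : l x ≤ Real.exp (a/2) * u ^ (a/2) * l u * x ^ (-(a/2)) := by
      rw [h2] at h1
      calc l x ≤ Real.exp (a/2) * (x ^ (-(a/2)) * u ^ (a/2)) * l u := h1
        _ = Real.exp (a/2) * u ^ (a/2) * l u * x ^ (-(a/2)) := by ring
    calc x ^ (a-1) * l x ≤ x ^ (a-1) * (Real.exp (a/2) * u ^ (a/2) * l u * x ^ (-(a/2))) := by
          apply mul_le_mul_of_nonneg_left h3 (le_of_lt (Real.rpow_pos_of_pos hx.1 _))
      _ = Real.exp (a/2) * u ^ (a/2) * l u * (x ^ (a-1) * x ^ (-(a/2))) := by ring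
      _ = Real.exp (a/2) * u ^ (a/2) * l u * x ^ (a/2 - 1) := by
          rw [← Real.rpow_add hx.1]
          congr 1
          ring_nf
  refine ⟨u₀, hu₀, hint u₀ ⟨hu₀.1, le_refl _⟩, ?_⟩
  -- the normalized integral
  set Φ : ℝ → ℝ := fun u => ∫ y in Ioc (0:ℝ) 1, y ^ (a-1) * (l (u * y) / l u) with hΦ
  have hev : Ioc (0:ℝ) u₀ ∈ 𝓝[>] (0:ℝ) := Ioc_mem_nhdsGT_of_mem ⟨le_refl _, hu₀.1⟩
  have heq : ∀ u ∈ Ioc (0:ℝ) u₀,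
      (∫ x in Ioc (0:ℝ) u, x ^ (a-1) * l x) / (u ^ a * l u) = Φ u := by
    intro u hu
    have hu0 : 0 < u := hu.1
    have hlu : 0 < l u := hpos u ⟨hu0, le_trans hu.2 hu₀.2⟩
    have step1 : (∫ x in Ioc (0:ℝ) u, x ^ (a-1) * l x) =
        u * ∫ y in (0:ℝ)..1, (u * y) ^ (a-1) * l (u * y) := by
      rw [← intervalIntegral.integral_of_le hu0.le]
      have := intervalIntegral.integral_comp_mul_left
        (f := fun x => x ^ (a-1) * l x) (a := (0:ℝ)) (b := (1:ℝ)) (c := u) hu0.ne'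
      rw [mul_zero, mul_one] at this
      rw [this, smul_eq_mul, ← mul_assoc, mul_inv_cancel₀ hu0.ne', one_mul]
    have step2 : (∫ y in (0:ℝ)..1, (u * y) ^ (a-1) * l (u * y)) =
        u ^ (a-1) * ∫ y in Ioc (0:ℝ) 1, y ^ (a-1) * l (u * y) := by
      rw [intervalIntegral.integral_of_le zero_le_one]
      rw [← MeasureTheory.integral_const_mul]
      apply setIntegral_congr_fun measurableSet_Ioc
      intro y hy
      dsimp only
      rw [Real.mul_rpow hu0.le hy.1.le]
      ring
    have step3 : Φ u = (∫ y in Ioc (0:ℝ) 1, y ^ (a-1) * l (u * y)) / l u := by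
      simp only [hΦ]
      rw [← MeasureTheory.integral_div]
      apply setIntegral_congr_fun measurableSet_Ioc
      intro y hy
      dsimp only
      ring
    rw [step1, step2, step3]
    have hua : u * u ^ (a-1) = u ^ a := by
      nth_rewrite 1 [← Real.rpow_one u]
      rw [← Real.rpow_add hu0]
      norm_num
    rw [← mul_assoc, hua]
    rw [mul_div_mul_left _ _ (ne_of_gt (Real.rpow_pos_of_pos hu0 a))]
  -- dominated convergence
  have hΦlim : Tendsto Φ (𝓝[>] 0) (𝓝 (1/a)) := by
    have hlim1 : (∫ y in Ioc (0:ℝ) 1, y ^ (a-1)) = 1/a := by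
      rw [← intervalIntegral.integral_of_le zero_le_one,
        integral_rpow (Or.inl (by linarith : (-1:ℝ) < a - 1))]
      norm_num
      rw [Real.zero_rpow (ne_of_gt ha)]
      norm_num
    rw [hΦ, ← hlim1]
    apply MeasureTheory.tendsto_integral_filter_of_dominated_convergence
      (fun y => Real.exp (a/2) * y ^ (a/2 - 1))
    · refine Eventually.of_forall fun u => ?_
      exact (((hrpowCOn (a-1) (Ioc 0 1) (fun x hx => hx.1)).aemeasurable
        measurableSet_Ioc).mul
        ((hm.comp (measurable_const.mul measurable_id)).aemeasurable.div_const _)).aestronglyMeasurable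
    · filter_upwards [hev] with u hu
      rw [ae_restrict_iff' measurableSet_Ioc]
      refine ae_of_all _ fun y hy => ?_
      have hy0 := hy.1
      have hu0 := hu.1
      have hlu : 0 < l u := hpos u ⟨hu0, le_trans hu.2 hu₀.2⟩
      have hluy : 0 < l (u * y) := hpos _ ⟨mul_pos hu0 hy0, by
        calc u * y ≤ u * 1 := by nlinarith [hy.2]
          _ = u := mul_one u
          _ ≤ c := le_trans hu.2 hu₀.2⟩
      rw [Real.norm_eq_abs, abs_of_nonneg (by positivity)]
      have h1 : l (u * y) / l u ≤ Real.exp (a/2) * y ^ (-(a/2)) := by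
        rw [div_le_iff₀ hlu]
        exact hpot u hu y hy
      calc y ^ (a-1) * (l (u * y) / l u) ≤ y ^ (a-1) * (Real.exp (a/2) * y ^ (-(a/2))) := by
            apply mul_le_mul_of_nonneg_left h1 (le_of_lt (Real.rpow_pos_of_pos hy0 _))
        _ = Real.exp (a/2) * (y ^ (a-1) * y ^ (-(a/2))) := by ring
        _ = Real.exp (a/2) * y ^ (a/2 - 1) := by
            rw [← Real.rpow_add hy0]
            congr 1
            ring_nf
    · exact hbint 1 one_pos _
    · rw [ae_restrict_iff' measurableSet_Ioc]
      refine ae_of_all _ fun y hy => ?_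
      have h1 : Tendsto (fun u => l (y * u) / l u) (𝓝[>] 0) (𝓝 1) := hsv y hy.1
      have h2 : Tendsto (fun u => y ^ (a-1) * (l (u * y) / l u)) (𝓝[>] 0)
          (𝓝 (y ^ (a-1) * 1)) := by
        apply Filter.Tendsto.const_mul
        simpa [mul_comm] using h1
      simpa using h2
  apply hΦlim.congr'
  filter_upwards [hev] with u hu
  exact (heq u hu).symm


theorem my_ratio (A g : ℝ → ℝ) (τ : ℝ) (hτ : 0 < τ)
    (hA : AEStronglyMeasurable A (volume.restrict (Ioc 0 τ)))
    (hg : IntegrableOn g (Ioc 0 τ))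
    (hgpos : ∀ s ∈ Ioc (0:ℝ) τ, 0 < g s)
    (h : Tendsto (fun s => A s / g s) (𝓝[>] 0) (𝓝 1)) :
    Tendsto (fun t => (∫ s in Ioc (0:ℝ) t, A s) / ∫ s in Ioc (0:ℝ) t, g s)
      (𝓝[>] 0) (𝓝 1) := by
  rw [Metric.tendsto_nhds]
  intro ε hε
  set ε' : ℝ := min (ε/2) (1/2) with hε'
  have hε'pos : 0 < ε' := by
    apply lt_min (by linarith) (by norm_num)
  have hε'le : ε' < ε := lt_of_le_of_lt (min_le_left _ _) (by linarith)
  -- get δ from h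
  have hev : ∀ᶠ s in 𝓝[>] (0:ℝ), |A s / g s - 1| < ε' := by
    have := Metric.tendsto_nhds.1 h ε' hε'pos
    simpa [Real.dist_eq] using this
  obtain ⟨δ₀, hδ₀, hδsub⟩ := mem_nhdsGT_iff_exists_Ioc_subset.1 hev
  set δ : ℝ := min δ₀ τ with hδdef
  have hδpos : 0 < δ := lt_min hδ₀ hτ
  have hratio : ∀ s ∈ Ioc (0:ℝ) δ, |A s - g s| ≤ ε' * g s := by
    intro s hs
    have hsτ : s ∈ Ioc (0:ℝ) τ := ⟨hs.1, le_trans hs.2 (min_le_right _ _)⟩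
    have hgs : 0 < g s := hgpos s hsτ
    have h1 : |A s / g s - 1| < ε' := hδsub ⟨hs.1, le_trans hs.2 (min_le_left _ _)⟩
    have h2 : A s / g s - 1 = (A s - g s) / g s := by field_simp
    rw [h2, abs_div, abs_of_pos hgs, div_lt_iff₀ hgs] at h1
    linarith [h1]
  -- now for t in (0, δ]
  filter_upwards [Ioc_mem_nhdsGT_of_mem ⟨le_refl (0:ℝ), hδpos⟩] with t ht
  have htτ : Ioc (0:ℝ) t ⊆ Ioc 0 τ := Ioc_subset_Ioc_right (le_trans ht.2 (min_le_right _ _))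
  have hgint : IntegrableOn g (Ioc 0 t) := hg.mono_set htτ
  have hAmeas : AEStronglyMeasurable A (volume.restrict (Ioc 0 t)) :=
    hA.mono_measure (Measure.restrict_mono htτ le_rfl)
  have hbd : ∀ᵐ s ∂(volume.restrict (Ioc 0 t)), ‖A s‖ ≤ (1 + ε') * g s := by
    rw [ae_restrict_iff' measurableSet_Ioc]
    refine ae_of_all _ fun s hs => ?_
    have hsδ : s ∈ Ioc (0:ℝ) δ := Ioc_subset_Ioc_right ht.2 hs
    have hgs : 0 < g s := hgpos s (htτ hs)
    have := hratio s hsδ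
    rw [Real.norm_eq_abs]
    have : |A s| - |g s| ≤ ε' * g s := le_trans (abs_sub_abs_le_abs_sub _ _) this
    rw [abs_of_pos hgs] at this
    linarith
  have hAint : IntegrableOn A (Ioc 0 t) :=
    Integrable.mono' (hgint.const_mul (1 + ε')) hAmeas hbd
  have hdiff : |(∫ s in Ioc (0:ℝ) t, A s) - ∫ s in Ioc (0:ℝ) t, g s| ≤
      ε' * ∫ s in Ioc (0:ℝ) t, g s := by
    rw [← integral_sub hAint hgint]
    calc |∫ s in Ioc (0:ℝ) t, (A s - g s)| ≤ ∫ s in Ioc (0:ℝ) t, |A s - g s| := by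
          simpa [Real.norm_eq_abs] using
            norm_integral_le_integral_norm (μ := volume.restrict (Ioc 0 t))
              (f := fun s => A s - g s)
      _ ≤ ∫ s in Ioc (0:ℝ) t, ε' * g s := by
          apply setIntegral_mono_on (hAint.sub hgint).abs (hgint.const_mul ε') measurableSet_Ioc
          intro s hs
          exact hratio s (Ioc_subset_Ioc_right ht.2 hs)
      _ = ε' * ∫ s in Ioc (0:ℝ) t, g s := integral_const_mul _ _
  have hgIpos : 0 < ∫ s in Ioc (0:ℝ) t, g s := by
    rw [setIntegral_pos_iff_support_of_nonneg_ae]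
    · have hsub : Ioc (0:ℝ) t ⊆ Function.support g ∩ Ioc 0 t := by
        intro s hs
        exact ⟨ne_of_gt (hgpos s (htτ hs)), hs⟩
      calc (0:ℝ≥0∞) < volume (Ioc (0:ℝ) t) := by
            rw [Real.volume_Ioc]
            simp [ht.1]
        _ ≤ volume (Function.support g ∩ Ioc 0 t) := measure_mono hsub
    · exact (ae_restrict_iff' measurableSet_Ioc).2
        (ae_of_all _ fun s hs => le_of_lt (hgpos s (htτ hs)))
    · exact hgint
  rw [Real.dist_eq]
  have hdiv : (∫ s in Ioc (0:ℝ) t, A s) / (∫ s in Ioc (0:ℝ) t, g s) - 1 =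
      ((∫ s in Ioc (0:ℝ) t, A s) - ∫ s in Ioc (0:ℝ) t, g s) / ∫ s in Ioc (0:ℝ) t, g s := by
    field_simp
  rw [hdiv, abs_div, abs_of_pos hgIpos, div_lt_iff₀ hgIpos]
  calc |(∫ s in Ioc (0:ℝ) t, A s) - ∫ s in Ioc (0:ℝ) t, g s| ≤
        ε' * ∫ s in Ioc (0:ℝ) t, g s := hdiff
    _ < ε * ∫ s in Ioc (0:ℝ) t, g s := by
        apply mul_lt_mul_of_pos_right hε'le hgIpos


theorem my_sym (F : ℝ → ℝ) (hF : ∀ x, F (-x) = F x) (u : ℝ) (hu : 0 < u)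
    (hint : IntegrableOn F (Ioc 0 u)) :
    ∫ x in {y : ℝ | 0 < |y| ∧ |y| ≤ u}, F x = 2 * ∫ x in Ioc 0 u, F x := by
  have hpre : (fun x : ℝ => -x) ⁻¹' (Ico (-u) 0) = Ioc 0 u := by
    ext x
    simp only [mem_preimage, mem_Ico, mem_Ioc, neg_le_neg_iff, neg_lt, neg_zero, le_neg]
    constructor
    · rintro ⟨h1, h2⟩; constructor <;> linarith
    · rintro ⟨h1, h2⟩; constructor <;> linarith
  have hemb : MeasurableEmbedding (fun x : ℝ => -x) := (Homeomorph.neg ℝ).measurableEmbedding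
  have hmp : MeasurePreserving (fun x : ℝ => -x) volume volume :=
    Measure.measurePreserving_neg _
  have hneg : ∫ x in Ico (-u) 0, F x = ∫ x in Ioc 0 u, F x := by
    have h1 := hmp.setIntegral_preimage_emb hemb F (Ico (-u) 0)
    rw [hpre] at h1
    rw [← h1]
    exact setIntegral_congr_fun measurableSet_Ioc fun x _ => hF x
  have hint2 : IntegrableOn F (Ico (-u) 0) := by
    have h2 := (hmp.integrableOn_comp_preimage hemb (f := F) (s := Ico (-u) 0)).1
    rw [hpre] at h2
    apply h2
    exact hint.congr_fun (fun x _ => (hF x).symm) measurableSet_Ioc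
  have hset : {y : ℝ | 0 < |y| ∧ |y| ≤ u} = Ico (-u) 0 ∪ Ioc 0 u := by
    ext y
    simp only [mem_setOf_eq, abs_pos, abs_le, mem_union, mem_Ico, mem_Ioc]
    constructor
    · rintro ⟨hne, h1, h2⟩
      rcases hne.lt_or_gt with h | h
      · exact Or.inl ⟨h1, h⟩
      · exact Or.inr ⟨h, h2⟩
    · rintro (⟨h1, h2⟩ | ⟨h1, h2⟩)
      · exact ⟨ne_of_lt h2, h1, by linarith⟩
      · exact ⟨ne_of_gt h1, by linarith, h2⟩
  rw [hset, setIntegral_union (by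
      rw [Set.disjoint_left]
      rintro y ⟨_, hy2⟩ ⟨hy3, _⟩
      linarith) measurableSet_Ioc hint2 hint, hneg]
  ring


theorem stmt15 (β c r : ℝ) (φ : ℝ → ℝ)
    (hβ0 : 0 < β) (hβ2 : β ≤ 2) (hc0 : 0 < c) (hc1 : c ≤ 1)
    (hφm : Measurable φ) (hφpos : ∀ x ∈ Set.Ioc (0 : ℝ) c, 0 < φ x)
    (hφrv : RegVaryingAtZero φ (-(β + 1)))
    (hr : β < r) :
    Tendsto (fun t =>
        (∫ s in Set.Ioc (0 : ℝ) t,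
          ∫ x in {y : ℝ | 0 < abs y ∧ abs y ≤ s ^ (1 / β)}, abs x ^ r * φ (abs x)) /
        (2 * β / ((r - β) * r) * (t ^ (r / β) * svPart φ β (t ^ (1 / β)))))
      (𝓝[>] 0) (𝓝 1) ∧
    Tendsto (fun s =>
        (∫ x in {y : ℝ | 0 < abs y ∧ abs y ≤ s ^ (1 / β)}, abs x ^ r * φ (abs x)) /
        (2 / (r - β) * (s ^ (r / β - 1) * svPart φ β (s ^ (1 / β)))))
      (𝓝[>] 0) (𝓝 1) := by
  have hβ0' : β ≠ 0 := ne_of_gt hβ0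
  have hr0 : 0 < r := lt_trans hβ0 hr
  have ha : 0 < r - β := by linarith
  have hβinv : 0 < 1/β := by positivity
  -- the slowly varying part
  have hlm : Measurable (svPart φ β) := by
    unfold svPart
    exact ((Real.continuous_rpow_const (by linarith : (0:ℝ) ≤ β + 1)).measurable).mul hφm
  have hlpos : ∀ x ∈ Set.Ioc (0:ℝ) c, 0 < svPart φ β x := by
    intro x hx
    exact mul_pos (Real.rpow_pos_of_pos hx.1 _) (hφpos x hx)
  have hlsv : ∀ s : ℝ, 0 < s →
      Tendsto (fun x => svPart φ β (s * x) / svPart φ β x) (𝓝[>] 0) (𝓝 1) := by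
    intro s hs
    have h1 : Tendsto (fun x => s ^ (β+1) * (φ (s * x) / φ x)) (𝓝[>] (0:ℝ))
        (𝓝 (s ^ (β+1) * s ^ (-(β+1)))) := (hφrv s hs).const_mul _
    have h2 : s ^ (β+1) * s ^ (-(β+1)) = 1 := by
      rw [← Real.rpow_add hs, add_neg_cancel, Real.rpow_zero]
    rw [h2] at h1
    apply h1.congr'
    filter_upwards [self_mem_nhdsWithin] with x hx
    have hx0 : (0:ℝ) < x := hx
    unfold svPart
    rw [Real.mul_rpow hs.le hx0.le]
    have h3 : s ^ (β+1) * x ^ (β+1) * φ (s * x) = x ^ (β+1) * (s ^ (β+1) * φ (s * x)) := by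
      ring
    rw [h3, mul_div_mul_left _ _ (ne_of_gt (Real.rpow_pos_of_pos hx0 _)), mul_div_assoc]
  -- Karamata for l
  obtain ⟨u₀, hu₀, hinta, hktend⟩ := my_karamata (svPart φ β) c hc0 hlm hlpos hlsv (r - β) ha
  -- the transformed slowly varying part  t ↦ l (t^(1/β))
  have hcβ : (0:ℝ) < c ^ β := Real.rpow_pos_of_pos hc0 _
  have hTiu : ∀ b : ℝ, 0 < b → ∀ s ∈ Set.Ioc (0:ℝ) (b ^ β), s ^ (1/β) ∈ Set.Ioc (0:ℝ) b := by
    intro b hb s hs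
    refine ⟨Real.rpow_pos_of_pos hs.1 _, ?_⟩
    have h1 : s ^ (1/β) ≤ (b ^ β) ^ (1/β) :=
      Real.rpow_le_rpow hs.1.le hs.2 (le_of_lt hβinv)
    rwa [← Real.rpow_mul hb.le, mul_one_div_cancel hβ0', Real.rpow_one] at h1
  have hT : Tendsto (fun s : ℝ => s ^ (1/β)) (𝓝[>] (0:ℝ)) (𝓝[>] (0:ℝ)) := by
    rw [tendsto_nhdsWithin_iff]
    constructor
    · have h1 := (Real.continuousAt_rpow_const 0 (1/β) (Or.inr (le_of_lt hβinv))).tendsto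
      rw [Real.zero_rpow (ne_of_gt hβinv)] at h1
      exact h1.mono_left nhdsWithin_le_nhds
    · exact eventually_mem_nhdsWithin.mono fun x hx => Real.rpow_pos_of_pos hx _
  have hlbm : Measurable (fun t : ℝ => svPart φ β (t ^ (1/β))) :=
    hlm.comp (Real.continuous_rpow_const (le_of_lt hβinv)).measurable
  have hlbpos : ∀ t ∈ Set.Ioc (0:ℝ) (c ^ β), 0 < svPart φ β (t ^ (1/β)) :=
    fun t ht => hlpos _ (hTiu c hc0 t ht)
  have hlbsv : ∀ σ : ℝ, 0 < σ →
      Tendsto (fun t => svPart φ β ((σ * t) ^ (1/β)) / svPart φ β (t ^ (1/β)))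
        (𝓝[>] 0) (𝓝 1) := by
    intro σ hσ
    have h1 := (hlsv (σ ^ (1/β)) (Real.rpow_pos_of_pos hσ _)).comp hT
    apply h1.congr'
    filter_upwards [self_mem_nhdsWithin] with t ht
    have ht0 : (0:ℝ) < t := ht
    simp only [Function.comp_apply]
    rw [Real.mul_rpow hσ.le ht0.le]
  obtain ⟨t₀, ht₀, hintb, hk2⟩ := my_karamata (fun t : ℝ => svPart φ β (t ^ (1/β)))
    (c ^ β) hcβ hlbm hlbpos hlbsv (r/β) (by positivity)
  -- the inner integrand identities
  have hEq : ∀ x : ℝ, 0 < x → |x| ^ r * φ |x| = x ^ (r - β - 1) * svPart φ β x := by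
    intro x hx
    rw [abs_of_pos hx]
    unfold svPart
    rw [← mul_assoc, ← Real.rpow_add hx]
    have : r - β - 1 + (β + 1) = r := by ring
    rw [this]
  have hs₀pos : (0:ℝ) < u₀ ^ β := Real.rpow_pos_of_pos hu₀.1 _
  have hu_mem : ∀ s ∈ Set.Ioc (0:ℝ) (u₀ ^ β), s ^ (1/β) ∈ Set.Ioc (0:ℝ) u₀ :=
    hTiu u₀ hu₀.1
  have hψ'int : ∀ u ∈ Set.Ioc (0:ℝ) u₀,
      IntegrableOn (fun x : ℝ => |x| ^ r * φ |x|) (Set.Ioc 0 u) := by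
    intro u hu
    exact (hinta.mono_set (Set.Ioc_subset_Ioc_right hu.2)).congr_fun
      (fun x hx => (hEq x hx.1).symm) measurableSet_Ioc
  have hAeq : ∀ s ∈ Set.Ioc (0:ℝ) (u₀ ^ β),
      (∫ x in {y : ℝ | 0 < |y| ∧ |y| ≤ s ^ (1/β)}, |x| ^ r * φ |x|) =
        2 * ∫ x in Set.Ioc (0:ℝ) (s ^ (1/β)), x ^ (r - β - 1) * svPart φ β x := by
    intro s hs
    have hu := hu_mem s hs
    rw [my_sym _ (fun x => by rw [abs_neg]) _ (Real.rpow_pos_of_pos hs.1 _) (hψ'int _ hu)]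
    congr 1
    exact setIntegral_congr_fun measurableSet_Ioc fun x hx => hEq x hx.1
  -- second statement
  have hgoal2 : Tendsto (fun s =>
      (∫ x in {y : ℝ | 0 < abs y ∧ abs y ≤ s ^ (1 / β)}, abs x ^ r * φ (abs x)) /
      (2 / (r - β) * (s ^ (r / β - 1) * svPart φ β (s ^ (1 / β)))))
      (𝓝[>] 0) (𝓝 1) := by
    have h1 := (hktend.comp hT).const_mul (r - β)
    rw [mul_one_div_cancel (ne_of_gt ha)] at h1
    apply h1.congr'
    filter_upwards [Ioc_mem_nhdsGT_of_mem ⟨le_refl (0:ℝ), hs₀pos⟩] with s hs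
    simp only [Function.comp_apply]
    rw [hAeq s hs]
    have hxp : s ^ (r/β - 1) = (s ^ (1/β)) ^ (r - β) := by
      rw [← Real.rpow_mul hs.1.le]
      congr 1
      field_simp
    rw [hxp]
    generalize (∫ x in Set.Ioc (0:ℝ) (s ^ (1/β)), x ^ (r - β - 1) * svPart φ β x) = Gv
    generalize ((s ^ (1/β)) ^ (r - β) * svPart φ β (s ^ (1/β))) = X
    rcases eq_or_ne X 0 with h | h
    · simp [h]
    · field_simp
  refine ⟨?_, hgoal2⟩
  -- first statement
  set g : ℝ → ℝ := fun s => 2 / (r - β) * (s ^ (r / β - 1) * svPart φ β (s ^ (1 / β)))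
    with hgdef
  set τ : ℝ := min (u₀ ^ β) t₀ with hτdef
  have hτpos : 0 < τ := lt_min hs₀pos ht₀.1
  have hτ1 : τ ≤ u₀ ^ β := min_le_left _ _
  have hτ2 : τ ≤ t₀ := min_le_right _ _
  have hgint : IntegrableOn g (Set.Ioc 0 τ) :=
    (hintb.mono_set (Set.Ioc_subset_Ioc_right hτ2)).const_mul _
  have hgpos : ∀ s ∈ Set.Ioc (0:ℝ) τ, 0 < g s := by
    intro s hs
    have hscβ : s ∈ Set.Ioc (0:ℝ) (c ^ β) :=
      ⟨hs.1, le_trans hs.2 (le_trans hτ2 ht₀.2)⟩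
    exact mul_pos (by positivity) (mul_pos (Real.rpow_pos_of_pos hs.1 _) (hlbpos s hscβ))
  -- measurability of the inner-integral function
  set G : ℝ → ℝ := fun u => ∫ x in Set.Ioc (0:ℝ) (min u u₀), x ^ (r - β - 1) * svPart φ β x
    with hGdef
  have hψnn : ∀ x ∈ Set.Ioc (0:ℝ) u₀, 0 ≤ x ^ (r - β - 1) * svPart φ β x := by
    intro x hx
    exact le_of_lt (mul_pos (Real.rpow_pos_of_pos hx.1 _)
      (hlpos x ⟨hx.1, le_trans hx.2 hu₀.2⟩))
  have hGmono : Monotone G := by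
    intro u v huv
    apply setIntegral_mono_set
      (hinta.mono_set (Set.Ioc_subset_Ioc_right (min_le_right _ _)))
    · exact (ae_restrict_iff' measurableSet_Ioc).2 (ae_of_all _ fun x hx =>
        hψnn x ⟨hx.1, le_trans hx.2 (min_le_right _ _)⟩)
    · exact HasSubset.Subset.eventuallyLE
        (Set.Ioc_subset_Ioc_right (min_le_min huv (le_refl u₀)))
  have hAm : AEStronglyMeasurable
      (fun s : ℝ => ∫ x in {y : ℝ | 0 < abs y ∧ abs y ≤ s ^ (1 / β)}, abs x ^ r * φ (abs x))
      (volume.restrict (Set.Ioc 0 τ)) := by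
    have hm2 : Measurable (fun s : ℝ => 2 * G (s ^ (1/β))) :=
      measurable_const.mul
        (hGmono.measurable.comp (Real.continuous_rpow_const (le_of_lt hβinv)).measurable)
    apply hm2.aestronglyMeasurable.congr
    refine (ae_restrict_iff' measurableSet_Ioc).2 (ae_of_all _ fun s hs => ?_)
    have hs' : s ∈ Set.Ioc (0:ℝ) (u₀ ^ β) := ⟨hs.1, le_trans hs.2 hτ1⟩
    show (2:ℝ) * G (s ^ (1/β)) =
      ∫ x in {y : ℝ | 0 < |y| ∧ |y| ≤ s ^ (1 / β)}, |x| ^ r * φ |x|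
    rw [hAeq s hs']
    simp only [hGdef]
    rw [min_eq_left (hu_mem s hs').2]
  -- ratio of integrals
  have hper := my_ratio _ g τ hτpos hAm hgint hgpos hgoal2
  -- positivity of ∫ g
  have hItpos : ∀ t ∈ Set.Ioc (0:ℝ) τ, 0 < ∫ s in Set.Ioc (0:ℝ) t, g s := by
    intro t ht
    have hgint' : IntegrableOn g (Set.Ioc 0 t) :=
      hgint.mono_set (Set.Ioc_subset_Ioc_right ht.2)
    rw [setIntegral_pos_iff_support_of_nonneg_ae]
    · have hsub : Set.Ioc (0:ℝ) t ⊆ Function.support g ∩ Set.Ioc 0 t := fun s hs =>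
        ⟨ne_of_gt (hgpos s ⟨hs.1, le_trans hs.2 ht.2⟩), hs⟩
      calc (0:ℝ≥0∞) < volume (Set.Ioc (0:ℝ) t) := by
            rw [Real.volume_Ioc]
            simp [ht.1]
        _ ≤ volume (Function.support g ∩ Set.Ioc 0 t) := measure_mono hsub
    · exact (ae_restrict_iff' measurableSet_Ioc).2
        (ae_of_all _ fun s hs => le_of_lt (hgpos s ⟨hs.1, le_trans hs.2 ht.2⟩))
    · exact hgint'
  -- combine
  have hmain := hper.mul (hk2.const_mul ((2/(r-β)) / (2 * β / ((r - β) * r))))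
  have hval : (1:ℝ) * ((2/(r-β)) / (2 * β / ((r - β) * r)) * (1/(r/β))) = 1 := by
    field_simp
  rw [hval] at hmain
  apply hmain.congr'
  filter_upwards [Ioc_mem_nhdsGT_of_mem ⟨le_refl (0:ℝ), hτpos⟩] with t ht
  have hItne : (∫ s in Set.Ioc (0:ℝ) t, g s) ≠ 0 := ne_of_gt (hItpos t ht)
  have hIt : (∫ s in Set.Ioc (0:ℝ) t, g s) =
      (2/(r-β)) * ∫ s in Set.Ioc (0:ℝ) t, s ^ (r/β - 1) * svPart φ β (s ^ (1/β)) := by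
    simp only [hgdef]
    exact MeasureTheory.integral_const_mul _ _
  set N : ℝ := ∫ s in Set.Ioc (0:ℝ) t,
    ∫ x in {y : ℝ | 0 < abs y ∧ abs y ≤ s ^ (1 / β)}, abs x ^ r * φ (abs x) with hNdef
  set J : ℝ := ∫ s in Set.Ioc (0:ℝ) t, s ^ (r/β - 1) * svPart φ β (s ^ (1/β)) with hJdef
  set X : ℝ := t ^ (r/β) * svPart φ β (t ^ (1/β)) with hXdef
  set K : ℝ := 2 * β / ((r - β) * r) with hKdef
  set I : ℝ := ∫ s in Set.Ioc (0:ℝ) t, g s with hIdef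
  calc N / I * ((2/(r-β)) / K * (J / X)) = N / I * ((2/(r-β)) * J / (K * X)) := by
        rw [div_mul_div_comm]
    _ = N / I * (I / (K * X)) := by rw [← hIt]
    _ = N * I / (I * (K * X)) := by rw [div_mul_div_comm]
    _ = I * N / (I * (K * X)) := by rw [mul_comm N I]
    _ = N / (K * X) := mul_div_mul_left _ _ hItne


end
end

section
/- Let Y be a real random variable on a probability space with E|Y|^p < ∞ for some p ∈ (0,1), and let C be a nonzero real constant. Then E[ |tY + C·t·log t|^p ] ∼ |C|^p · t^p · |log t|^p as t → 0+, i.e. the ratio E|tY + Ct log t|^p / (|C|^p t^p |log t|^p) tends to 1 as t → 0+. -/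
open MeasureTheory ProbabilityTheory Filter Set Topology ENNReal NNReal

noncomputable section

lemma aux_rpow_add_le {p a b : ℝ} (hp0 : 0 ≤ p) (hp1 : p ≤ 1) (ha : 0 ≤ a) (hb : 0 ≤ b) :
    (a + b) ^ p ≤ a ^ p + b ^ p := by
  have h := NNReal.rpow_add_le_add_rpow a.toNNReal b.toNNReal hp0 hp1
  rw [← Real.toNNReal_add ha hb] at h
  have h2 := NNReal.coe_le_coe.2 h
  simpa [NNReal.coe_rpow, Real.coe_toNNReal _ ha, Real.coe_toNNReal _ hb,
    Real.coe_toNNReal _ (add_nonneg ha hb)] using h2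

lemma aux_abs_rpow_add_le {p : ℝ} (hp0 : 0 ≤ p) (hp1 : p ≤ 1) (a b : ℝ) :
    |a + b| ^ p ≤ |a| ^ p + |b| ^ p :=
  (Real.rpow_le_rpow (abs_nonneg _) (abs_add_le a b) hp0).trans
    (aux_rpow_add_le hp0 hp1 (abs_nonneg a) (abs_nonneg b))

theorem stmt18 {Ω : Type*} [MeasurableSpace Ω] (P : Measure Ω)
    [IsProbabilityMeasure P] (Y : Ω → ℝ) (p C : ℝ)
    (hY : Measurable Y) (hp0 : 0 < p) (hp1 : p < 1)
    (hmom : ∫⁻ ω, ENNReal.ofReal (|Y ω| ^ p) ∂P < ⊤)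
    (hC : C ≠ 0) :
    Tendsto (fun t : ℝ =>
        (∫ ω, |t * Y ω + C * t * Real.log t| ^ p ∂P) /
          (|C| ^ p * t ^ p * |Real.log t| ^ p))
      (𝓝[>] 0) (𝓝 1) := by
  have hYm : Measurable fun ω => |Y ω| ^ p := (Real.continuous_rpow_const hp0.le).measurable.comp hY.abs
  have hInt : Integrable (fun ω => |Y ω| ^ p) P := by
    refine ⟨hYm.aestronglyMeasurable, ?_⟩
    rw [hasFiniteIntegral_iff_ofReal (ae_of_all _ fun ω => Real.rpow_nonneg (abs_nonneg _) p)]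
    exact hmom
  set M : ℝ := ∫ ω, |Y ω| ^ p ∂P with hMdef
  have hIntc : ∀ c : ℝ, Integrable (fun ω => |Y ω + c| ^ p) P := by
    intro c
    refine Integrable.mono' (hInt.add (integrable_const (|c| ^ p)))
      ((Real.continuous_rpow_const hp0.le).measurable.comp (hY.add_const c).abs).aestronglyMeasurable
      (ae_of_all _ fun ω => ?_)
    rw [Real.norm_eq_abs, abs_of_nonneg (Real.rpow_nonneg (abs_nonneg _) p)]
    exact aux_abs_rpow_add_le hp0.le hp1.le (Y ω) c
  have key : ∀ c : ℝ, |(∫ ω, |Y ω + c| ^ p ∂P) - |c| ^ p| ≤ M := by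
    intro c
    have hptw : ∀ ω, |(|Y ω + c| ^ p - |c| ^ p)| ≤ |Y ω| ^ p := by
      intro ω
      rw [abs_sub_le_iff]
      constructor
      · have := aux_abs_rpow_add_le hp0.le hp1.le (Y ω) c
        linarith
      · have : |c| ^ p ≤ |Y ω + c| ^ p + |Y ω| ^ p := by
          have h1 : |c| ^ p = |(Y ω + c) + (-(Y ω))| ^ p := by ring_nf
          rw [h1]
          have := aux_abs_rpow_add_le hp0.le hp1.le (Y ω + c) (-(Y ω))
          simpa using this
        linarith
    have heq : (∫ ω, |Y ω + c| ^ p ∂P) - |c| ^ p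
        = ∫ ω, (|Y ω + c| ^ p - |c| ^ p) ∂P := by
      rw [integral_sub (hIntc c) (integrable_const _), integral_const]
      simp
    rw [heq]
    calc |∫ ω, (|Y ω + c| ^ p - |c| ^ p) ∂P|
        ≤ ∫ ω, |(|Y ω + c| ^ p - |c| ^ p)| ∂P := by
          simpa [Real.norm_eq_abs] using
            norm_integral_le_integral_norm (μ := P) (fun ω => |Y ω + c| ^ p - |c| ^ p)
      _ ≤ ∫ ω, |Y ω| ^ p ∂P :=
          integral_mono ((hIntc c).sub (integrable_const _)).abs hInt hptw
  -- limit of error term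
  have hlogT : Tendsto (fun t : ℝ => |C * Real.log t|) (𝓝[>] 0) atTop := by
    have h1 : Tendsto Real.log (𝓝[>] (0:ℝ)) atBot := Real.tendsto_log_nhdsGT_zero
    have h2 : Tendsto (fun t : ℝ => |Real.log t|) (𝓝[>] 0) atTop :=
      tendsto_abs_atBot_atTop.comp h1
    have h3 : Tendsto (fun t : ℝ => |C| * |Real.log t|) (𝓝[>] 0) atTop :=
      Tendsto.const_mul_atTop (abs_pos.2 hC) h2
    simpa [abs_mul] using h3
  have herr : Tendsto (fun t : ℝ => M / |C * Real.log t| ^ p) (𝓝[>] 0) (𝓝 0) :=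
    Tendsto.div_atTop tendsto_const_nhds ((_root_.tendsto_rpow_atTop hp0).comp hlogT)
  have hlo : Tendsto (fun t : ℝ => 1 - M / |C * Real.log t| ^ p) (𝓝[>] 0) (𝓝 1) := by
    simpa using tendsto_const_nhds.sub herr
  have hhi : Tendsto (fun t : ℝ => 1 + M / |C * Real.log t| ^ p) (𝓝[>] 0) (𝓝 1) := by
    simpa using tendsto_const_nhds.add herr
  refine tendsto_of_tendsto_of_tendsto_of_le_of_le' hlo hhi ?_ ?_
  all_goals {
    filter_upwards [Ioo_mem_nhdsGT_of_mem (by norm_num : (0:ℝ) ∈ Ico 0 1)] with t ht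
    obtain ⟨ht0, ht1⟩ := ht
    set c := C * Real.log t with hcdef
    have hlogne : Real.log t < 0 := Real.log_neg ht0 ht1
    have hcne : c ≠ 0 := mul_ne_zero hC hlogne.ne
    have hcp : 0 < |c| ^ p := Real.rpow_pos_of_pos (abs_pos.2 hcne) p
    have htp : 0 < t ^ p := Real.rpow_pos_of_pos ht0 p
    have hratio : (∫ ω, |t * Y ω + C * t * Real.log t| ^ p ∂P) /
          (|C| ^ p * t ^ p * |Real.log t| ^ p)
        = (∫ ω, |Y ω + c| ^ p ∂P) / |c| ^ p := by
      have hnum : (∫ ω, |t * Y ω + C * t * Real.log t| ^ p ∂P)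
          = t ^ p * ∫ ω, |Y ω + c| ^ p ∂P := by
        rw [← integral_const_mul]
        congr 1
        ext ω
        have : t * Y ω + C * t * Real.log t = t * (Y ω + c) := by ring
        rw [this, abs_mul, abs_of_pos ht0,
          Real.mul_rpow ht0.le (abs_nonneg _)]
      have hden : |C| ^ p * t ^ p * |Real.log t| ^ p = t ^ p * |c| ^ p := by
        rw [hcdef, abs_mul, Real.mul_rpow (abs_nonneg _) (abs_nonneg _)]
        ring
      rw [hnum, hden, mul_div_mul_left _ _ htp.ne']
    rw [hratio]
    have hk := key c
    rw [abs_sub_le_iff] at hk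
    have hMd : M / |c| ^ p * |c| ^ p = M := div_mul_cancel₀ M hcp.ne'
    first
      | (rw [le_div_iff₀ hcp, sub_mul, one_mul, hMd]; linarith [hk.2])
      | (rw [div_le_iff₀ hcp, add_mul, one_mul, hMd]; linarith [hk.1])
  }


end
end

section
/- Let γ > 0 and p > 1/2, and for t > 0 define the p-th moment of the inverse Gaussian distribution m(t) = (t/√(2π)) ∫₀^∞ x^{p−3/2} exp( −(1/2)·( t/√x − γ√x )² ) dx. Then m(t) ∼ (2^{p−1} Γ(p−1/2) / (√π · γ^{2p−1})) · t as t → 0+, i.e. m(t)/t converges to 2^{p−1} Γ(p−1/2) / (√π · γ^{2p−1}). -/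
open MeasureTheory ProbabilityTheory Filter Set Topology ENNReal NNReal

noncomputable section

theorem stmt19 (γ p : ℝ) (hγ : 0 < γ) (hp : 1 / 2 < p) :
    Tendsto (fun t : ℝ =>
        ((t / Real.sqrt (2 * Real.pi)) *
          ∫ x in Set.Ioi (0 : ℝ),
            x ^ (p - 3 / 2) *
              Real.exp (-(1 / 2) * (t / Real.sqrt x - γ * Real.sqrt x) ^ 2)) / t)
      (𝓝[>] 0)
      (𝓝 (2 ^ (p - 1) * Real.Gamma (p - 1 / 2) / (Real.sqrt Real.pi * γ ^ (2 * p - 1)))) := by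
  have hs2π : (0:ℝ) < Real.sqrt (2 * Real.pi) := Real.sqrt_pos.mpr (by positivity)
  -- the limit of the integral
  have hL : (∫ x in Set.Ioi (0:ℝ), x ^ (p - 3/2) * Real.exp (-(γ^2/2 * x)))
      = (1/(γ^2/2)) ^ (p - 1/2) * Real.Gamma (p - 1/2) := by
    have h := Real.integral_rpow_mul_exp_neg_mul_Ioi (a := p - 1/2) (r := γ^2/2)
      (by linarith) (by positivity)
    have he : p - 1/2 - 1 = p - 3/2 := by ring
    rw [he] at h
    exact h
  -- dominated convergence
  have key : Tendsto (fun t : ℝ => ∫ x in Set.Ioi (0:ℝ),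
        x ^ (p - 3/2) * Real.exp (-(1/2) * (t / Real.sqrt x - γ * Real.sqrt x) ^ 2))
      (𝓝[>] 0)
      (𝓝 (∫ x in Set.Ioi (0:ℝ), x ^ (p - 3/2) * Real.exp (-(γ^2/2 * x)))) := by
    apply tendsto_integral_filter_of_dominated_convergence
      (fun x : ℝ => Real.exp γ * (x ^ (p - 3/2) * Real.exp (-(γ^2/2 * x))))
    · filter_upwards with t
      apply ContinuousOn.aestronglyMeasurable _ measurableSet_Ioi
      intro x hx
      have hx0 : (0:ℝ) < x := hx
      have hs : ContinuousWithinAt Real.sqrt (Set.Ioi 0) x :=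
        Real.continuous_sqrt.continuousWithinAt
      refine ContinuousWithinAt.mul ?_ ?_
      · exact continuousWithinAt_id.rpow_const (Or.inl hx0.ne')
      · exact Real.continuous_exp.continuousAt.comp_continuousWithinAt
          ((((continuousWithinAt_const.div hs (Real.sqrt_pos.mpr hx0).ne').sub
            (continuousWithinAt_const.mul hs)).pow 2).const_mul _)
    · filter_upwards [Ioc_mem_nhdsGT_of_mem (Set.mem_Ico.mpr ⟨le_refl (0:ℝ), zero_lt_one⟩)]
        with t ht
      filter_upwards [ae_restrict_mem measurableSet_Ioi] with x hx
      have hx0 : (0:ℝ) < x := hx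
      obtain ⟨s, hs0, rfl⟩ : ∃ s : ℝ, 0 < s ∧ s ^ 2 = x :=
        ⟨Real.sqrt x, Real.sqrt_pos.mpr hx0, Real.sq_sqrt hx0.le⟩
      rw [Real.sqrt_sq hs0.le]
      have hexpand : (t / s - γ * s) ^ 2
          = t^2 / s^2 - 2 * t * γ + γ^2 * s^2 := by
        field_simp
        ring
      have hb : -(1/2) * (t / s - γ * s) ^ 2 ≤ γ + -(γ^2/2 * s^2) := by
        rw [hexpand]
        have h1 : 0 ≤ t^2 / s^2 := by positivity
        have h2 : t * γ ≤ γ := mul_le_of_le_one_left hγ.le ht.2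
        nlinarith
      have hnn : 0 ≤ (s^2) ^ (p - 3/2) := Real.rpow_nonneg (by positivity) _
      rw [Real.norm_eq_abs, abs_of_nonneg (by positivity)]
      calc (s^2) ^ (p - 3/2) * Real.exp (-(1/2) * (t / s - γ * s) ^ 2)
          ≤ (s^2) ^ (p - 3/2) * Real.exp (γ + -(γ^2/2 * s^2)) := by
            exact mul_le_mul_of_nonneg_left (Real.exp_le_exp.mpr hb) hnn
        _ = Real.exp γ * ((s^2) ^ (p - 3/2) * Real.exp (-(γ^2/2 * s^2))) := by
            rw [Real.exp_add]; ring
    · apply Integrable.const_mul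
      have h := integrableOn_rpow_mul_exp_neg_mul_rpow (s := p - 3/2) (p := 1) (b := γ^2/2)
        (by linarith) zero_lt_one (by positivity)
      refine (h.congr_fun (fun x hx => ?_) measurableSet_Ioi)
      simp only [Real.rpow_one]
      ring_nf
    · filter_upwards [ae_restrict_mem measurableSet_Ioi] with x hx
      have hx0 : (0:ℝ) < x := hx
      have hc : ContinuousAt (fun t : ℝ =>
          x ^ (p - 3/2) * Real.exp (-(1/2) * (t / Real.sqrt x - γ * Real.sqrt x) ^ 2)) 0 := by
        fun_prop
      have h0 : -(1/2) * ((0:ℝ) / Real.sqrt x - γ * Real.sqrt x) ^ 2 = -(γ^2/2 * x) := by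
        rw [zero_div, zero_sub, neg_sq, mul_pow, Real.sq_sqrt hx0.le]
        ring
      have := hc.tendsto.mono_left (nhdsWithin_le_nhds (s := Set.Ioi (0:ℝ)))
      rw [h0] at this
      exact this
  -- constant identity
  have hconst : ((1/(γ^2/2)) ^ (p - 1/2) * Real.Gamma (p - 1/2)) / Real.sqrt (2 * Real.pi)
      = 2 ^ (p - 1) * Real.Gamma (p - 1/2) / (Real.sqrt Real.pi * γ ^ (2 * p - 1)) := by
    have h1 : (1/(γ^2/2) : ℝ) = 2/γ^2 := by field_simp
    have h2 : ((2/γ^2 : ℝ)) ^ (p - 1/2) = 2 ^ (p - 1/2) / γ ^ (2*p - 1) := by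
      rw [Real.div_rpow (by norm_num) (sq_nonneg γ)]
      congr 1
      rw [← Real.rpow_natCast γ 2, ← Real.rpow_mul hγ.le]
      congr 1
      push_cast
      ring
    have h3 : Real.sqrt (2 * Real.pi) = Real.sqrt 2 * Real.sqrt Real.pi :=
      Real.sqrt_mul (by norm_num) _
    have h4 : (2:ℝ) ^ (p - 1/2) = 2 ^ (p - 1) * Real.sqrt 2 := by
      rw [Real.sqrt_eq_rpow, ← Real.rpow_add (by norm_num : (0:ℝ) < 2)]
      congr 1
      ring
    have hγp : (0:ℝ) < γ ^ (2*p - 1) := Real.rpow_pos_of_pos hγ _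
    have hs2 : (0:ℝ) < Real.sqrt 2 := Real.sqrt_pos.mpr (by norm_num)
    have hsπ : (0:ℝ) < Real.sqrt Real.pi := Real.sqrt_pos.mpr Real.pi_pos
    rw [h1, h2, h3, h4]
    field_simp
  -- put everything together
  have final : Tendsto (fun t : ℝ => (∫ x in Set.Ioi (0:ℝ),
        x ^ (p - 3/2) * Real.exp (-(1/2) * (t / Real.sqrt x - γ * Real.sqrt x) ^ 2))
        / Real.sqrt (2 * Real.pi))
      (𝓝[>] 0)
      (𝓝 (2 ^ (p - 1) * Real.Gamma (p - 1/2) / (Real.sqrt Real.pi * γ ^ (2 * p - 1)))) := by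
    rw [← hconst, ← hL]
    exact key.div_const _
  refine final.congr' ?_
  filter_upwards [self_mem_nhdsWithin] with t ht
  have ht0 : (0:ℝ) < t := ht
  generalize (∫ x in Set.Ioi (0:ℝ), x ^ (p - 3/2) * Real.exp (-(1/2) * (t / Real.sqrt x - γ * Real.sqrt x) ^ 2)) = I
  field_simp

end
end
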